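/- For the Gaussian mixture model with ℓ_p-bounded adversary (1/p + 1/q = 1), the classifier f(x) = sgn(w^⊤x) has adversarial risk AdvRisk_ε(f) = Pr_{Z∼N(0,1)}[Z ≤ (ε‖w‖_q - w^⊤θ*)/√(w^⊤Σ*w)]. -/

import Mathlib

open Finset MeasureTheory ProbabilityTheory
open scoped ENNReal
open scoped NNReal

/-- Dot product on `ℝᵈ`. -/
noncomputable def dotp {d : ℕ} (a b : Fin d → ℝ) : ℝ := ∑ i, a i * b i

/-- The `ℓ_p` norm on `ℝᵈ`. -/
noncomputable def lpnorm {d : ℕ} (p : ℝ) (a : Fin d → ℝ) : ℝ :=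
  (∑ i, |a i| ^ p) ^ (1 / p)

/-- The sign function: `sg r = 1` if `r ≥ 0`, `-1` otherwise. -/
noncomputable def sg (r : ℝ) : ℝ := if 0 ≤ r then 1 else -1

/-- `ν` is the multivariate Gaussian `N(θ, S)`, characterized by all its one-dimensional
projections: for every `w`, `wᵀX ∼ N(wᵀθ, wᵀSw)`. -/
def IsGaussianVec {d : ℕ} (θ : Fin d → ℝ) (S : Matrix (Fin d) (Fin d) ℝ)
    (ν : Measure (Fin d → ℝ)) : Prop :=
  ∀ w : Fin d → ℝ,
    ν.map (fun x => dotp w x)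
      = gaussianReal (dotp w θ) (Real.toNNReal (dotp w (S.mulVec w)))

/-- The Gaussian mixture model: `y ∼ Unif{-1,+1}`, `x | y ∼ N(y θ, S)`; the joint law of
`(x, y)` on `ℝᵈ × ℝ`. -/
noncomputable def mixture {d : ℕ} (νpos νneg : Measure (Fin d → ℝ)) :
    Measure ((Fin d → ℝ) × ℝ) :=
  (2 : ℝ≥0∞)⁻¹ • (νpos.map (fun x => (x, (1 : ℝ))))
    + (2 : ℝ≥0∞)⁻¹ • (νneg.map (fun x => (x, (-1 : ℝ))))

/-! ### Auxiliary lemmas -/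

lemma lpnorm_nonneg {d : ℕ} (p : ℝ) (a : Fin d → ℝ) : 0 ≤ lpnorm p a :=
  Real.rpow_nonneg (Finset.sum_nonneg fun _ _ => Real.rpow_nonneg (abs_nonneg _) _) _

lemma holder_bound {d : ℕ} {p q : ℝ} (hpq : Real.HolderConjugate p q)
    (w u : Fin d → ℝ) : dotp w u ≤ lpnorm p u * lpnorm q w := by
  have h := Real.inner_le_Lp_mul_Lq (s := Finset.univ) (f := u) (g := w) hpq
  have h2 : dotp w u = ∑ i, u i * w i := by simp [dotp, mul_comm]
  rw [h2]
  exact h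

lemma holder_bound' {d : ℕ} {p q : ℝ} (hpq : Real.HolderConjugate p q)
    (w u : Fin d → ℝ) : -(lpnorm p u * lpnorm q w) ≤ dotp w u := by
  have h := holder_bound hpq w (fun i => -u i)
  have h2 : dotp w (fun i => -u i) = -dotp w u := by simp [dotp]
  have h3 : lpnorm p (fun i => -u i) = lpnorm p u := by simp [lpnorm]
  rw [h2, h3] at h
  linarith

lemma exists_extremal {d : ℕ} {p q : ℝ} (hpq : Real.HolderConjugate p q)
    {w : Fin d → ℝ} (hw : w ≠ 0) {ε : ℝ} (hε : 0 ≤ ε) :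
    ∃ δ : Fin d → ℝ, lpnorm p δ ≤ ε ∧ dotp w δ = ε * lpnorm q w := by
  have hq1 : 1 < q := hpq.symm.lt
  have hq0 : q ≠ 0 := by positivity
  have hp0 : p ≠ 0 := by have := hpq.lt; positivity
  have hqp : (q - 1) * p = q := by
    have h := hpq.inv_add_inv_eq_one
    field_simp at h
    nlinarith [h]
  set N : ℝ := ∑ i, |w i| ^ q with hN
  obtain ⟨j, hj⟩ := Function.ne_iff.mp hw
  have hNpos : 0 < N := by
    have h1 : (0:ℝ) < |w j| ^ q := Real.rpow_pos_of_pos (abs_pos.mpr hj) _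
    have h2 : |w j| ^ q ≤ N :=
      Finset.single_le_sum (f := fun i => |w i| ^ q)
        (fun i _ => Real.rpow_nonneg (abs_nonneg _) _) (Finset.mem_univ j)
    linarith
  set K : ℝ := lpnorm q w with hK
  have hKpos : 0 < K := Real.rpow_pos_of_pos hNpos _
  have hKq : K ^ q = N := by
    rw [hK, lpnorm, ← hN, ← Real.rpow_mul hNpos.le, one_div_mul_cancel hq0, Real.rpow_one]
  have hKq1pos : (0:ℝ) < K ^ (q - 1) := Real.rpow_pos_of_pos hKpos _
  set c : ℝ := ε / K ^ (q - 1) with hc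
  have hc0 : 0 ≤ c := div_nonneg hε hKq1pos.le
  refine ⟨fun i => c * (Real.sign (w i) * |w i| ^ (q - 1)), ?_, ?_⟩
  · -- lpnorm p δ = ε
    have habs : ∀ i : Fin d, |c * (Real.sign (w i) * |w i| ^ (q-1))| ^ p
        = c ^ p * |w i| ^ q := by
      intro i
      by_cases hwi : w i = 0
      · simp [hwi, Real.sign_zero, Real.zero_rpow hq0,
          Real.zero_rpow (by positivity : p ≠ 0), Real.zero_rpow (by linarith : q - 1 ≠ 0)]
      · have hsign : |Real.sign (w i)| = 1 := by
          rcases Real.sign_apply_eq_of_ne_zero _ hwi with h | h <;> simp [h]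
        have h1 : |c * (Real.sign (w i) * |w i| ^ (q-1))| = c * |w i| ^ (q-1) := by
          rw [abs_mul, abs_mul, hsign, abs_of_nonneg hc0, one_mul,
            abs_of_nonneg (Real.rpow_nonneg (abs_nonneg _) _)]
        rw [h1, Real.mul_rpow hc0 (Real.rpow_nonneg (abs_nonneg _) _),
          ← Real.rpow_mul (abs_nonneg (w i)), hqp]
    have hsum : ∑ i, |c * (Real.sign (w i) * |w i| ^ (q-1))| ^ p = c ^ p * N := by
      rw [hN, Finset.mul_sum]
      exact Finset.sum_congr rfl fun i _ => habs i
    rw [lpnorm, hsum, Real.mul_rpow (Real.rpow_nonneg hc0 _) hNpos.le,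
      ← Real.rpow_mul hc0, mul_one_div_cancel hp0, Real.rpow_one]
    have hNp : N ^ (1/p) = K ^ (q-1) := by
      rw [hK, lpnorm, ← hN, ← Real.rpow_mul hNpos.le]
      congr 1
      have h := hpq.inv_add_inv_eq_one
      field_simp
      field_simp at h
      nlinarith [h]
    rw [hNp, hc, div_mul_cancel₀ _ (ne_of_gt hKq1pos)]
  · -- dotp w δ = ε * K
    have hterm : ∀ i : Fin d, w i * (c * (Real.sign (w i) * |w i| ^ (q-1)))
        = c * |w i| ^ q := by
      intro i
      by_cases hwi : w i = 0
      · simp [hwi, Real.zero_rpow hq0]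
      · have hws : w i * Real.sign (w i) = |w i| := by
          rcases lt_or_gt_of_ne hwi with h | h
          · rw [Real.sign_of_neg h]; rw [abs_of_neg h]; ring
          · rw [Real.sign_of_pos h]; rw [abs_of_pos h]; ring
        have : |w i| * |w i| ^ (q - 1) = |w i| ^ q := by
          rw [mul_comm, ← Real.rpow_add_one (abs_ne_zero.mpr hwi), sub_add_cancel]
        calc w i * (c * (Real.sign (w i) * |w i| ^ (q-1)))
            = c * (w i * Real.sign (w i) * |w i| ^ (q-1)) := by ring
          _ = c * (|w i| * |w i| ^ (q-1)) := by rw [hws]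
          _ = c * |w i| ^ q := by rw [this]
    have : dotp w (fun i => c * (Real.sign (w i) * |w i| ^ (q-1))) = c * N := by
      rw [dotp, hN, Finset.mul_sum]
      exact Finset.sum_congr rfl fun i _ => hterm i
    rw [this, hc, ← hKq]
    have hKK : K ^ (q-1) * K = K ^ q := by
      rw [← Real.rpow_add_one (ne_of_gt hKpos), sub_add_cancel]
    rw [div_mul_eq_mul_div, div_eq_iff (ne_of_gt hKq1pos)]
    linear_combination -ε * hKK

lemma sg_ne_one_iff (r : ℝ) : sg r ≠ 1 ↔ r < 0 := by
  unfold sg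
  split_ifs with h
  · simp [not_lt.mpr h]
  · constructor
    · intro _; exact lt_of_not_ge h
    · intro _; norm_num

lemma sg_ne_neg_one_iff (r : ℝ) : sg r ≠ -1 ↔ 0 ≤ r := by
  unfold sg
  split_ifs with h
  · constructor
    · intro _; exact h
    · intro _; norm_num
  · constructor
    · intro h'; exact absurd rfl h'
    · intro h'; exact absurd h' h

lemma gaussianReal_singleton (m a : ℝ) {v : ℝ≥0} (hv : v ≠ 0) :
    gaussianReal m v {a} = 0 :=
  gaussianReal_absolutelyContinuous m hv (Real.volume_singleton)

lemma gaussianReal_Iic_eq_Iio (a : ℝ) :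
    gaussianReal 0 1 (Set.Iic a) = gaussianReal 0 1 (Set.Iio a) := by
  refine le_antisymm ?_ (measure_mono Set.Iio_subset_Iic_self)
  rw [← Set.Iio_union_right]
  refine (measure_union_le _ _).trans ?_
  rw [gaussianReal_singleton _ _ one_ne_zero, add_zero]

lemma gaussianReal_eq_map (m : ℝ) {v : ℝ} (hv : 0 < v) :
    gaussianReal m (Real.toNNReal v) =
      (gaussianReal 0 1).map (fun z => Real.sqrt v * z + m) := by
  set σ := Real.sqrt v with hσ
  have h1 : (gaussianReal 0 1).map (fun z => σ * z) = gaussianReal 0 (Real.toNNReal v) := by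
    have h := gaussianReal_map_const_mul (μ := 0) (v := 1) σ
    rw [h, mul_zero]
    congr 1
    ext
    simp [hσ, Real.sq_sqrt hv.le, Real.coe_toNNReal _ hv.le]
  have h2 : (fun z => σ * z + m) = (fun z => z + m) ∘ (fun z => σ * z) := rfl
  rw [h2, ← Measure.map_map (measurable_add_const m) (measurable_const_mul σ), h1,
    gaussianReal_map_add_const m, zero_add]

lemma gaussianReal_Iio' (m c : ℝ) {v : ℝ} (hv : 0 < v) :
    gaussianReal m (Real.toNNReal v) (Set.Iio c)
      = gaussianReal 0 1 (Set.Iic ((c - m) / Real.sqrt v)) := by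
  set σ := Real.sqrt v with hσ
  have hσpos : 0 < σ := Real.sqrt_pos.mpr hv
  rw [gaussianReal_eq_map m hv,
    Measure.map_apply (by fun_prop) measurableSet_Iio]
  have hpre : (fun z => σ * z + m) ⁻¹' Set.Iio c = Set.Iio ((c - m) / σ) := by
    ext z
    simp only [Set.mem_preimage, Set.mem_Iio]
    rw [lt_div_iff₀ hσpos]
    constructor <;> intro h <;> nlinarith
  rw [hpre, gaussianReal_Iic_eq_Iio]

lemma gaussianReal_neg_symm (a : ℝ) :
    gaussianReal 0 1 (Set.Ici a) = gaussianReal 0 1 (Set.Iic (-a)) := by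
  have h : (gaussianReal 0 1).map (fun z => (-1 : ℝ) * z) = gaussianReal 0 1 := by
    rw [gaussianReal_map_const_mul (μ := 0) (v := 1) (-1), mul_zero]
    congr 1
    ext
    norm_num
  conv_lhs => rw [← h]
  rw [Measure.map_apply (measurable_const_mul _) measurableSet_Ici]
  congr 1
  ext z
  simp only [Set.mem_preimage, Set.mem_Ici, Set.mem_Iic]
  constructor <;> intro hz <;> linarith

lemma gaussianReal_Ici' (m c : ℝ) {v : ℝ} (hv : 0 < v) :
    gaussianReal m (Real.toNNReal v) (Set.Ici c)
      = gaussianReal 0 1 (Set.Iic ((m - c) / Real.sqrt v)) := by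
  set σ := Real.sqrt v with hσ
  have hσpos : 0 < σ := Real.sqrt_pos.mpr hv
  rw [gaussianReal_eq_map m hv,
    Measure.map_apply (by fun_prop) measurableSet_Ici]
  have hpre : (fun z => σ * z + m) ⁻¹' Set.Ici c = Set.Ici ((c - m) / σ) := by
    ext z
    simp only [Set.mem_preimage, Set.mem_Ici]
    rw [div_le_iff₀ hσpos]
    constructor <;> intro h <;> nlinarith
  rw [hpre, gaussianReal_neg_symm]
  congr 2
  rw [← neg_div, neg_sub]

/-- In the Gaussian mixture model with an `ℓ_p`-bounded adversary (conjugate exponents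
`p, q`), the adversarial risk of `f(x) = sgn(wᵀx)` equals
`Pr_{Z∼N(0,1)}[Z ≤ (ε‖w‖_q - wᵀθ*) / √(wᵀΣ*w)]`. -/
theorem gaussian_mixture_advRisk {d : ℕ} (θ : Fin d → ℝ) (S : Matrix (Fin d) (Fin d) ℝ)
    (νpos νneg : Measure (Fin d → ℝ)) [IsProbabilityMeasure νpos] [IsProbabilityMeasure νneg]
    (hpos : IsGaussianVec θ S νpos) (hneg : IsGaussianVec (fun i => -θ i) S νneg)
    (w : Fin d → ℝ) (hw : lpnorm 2 w = 1) (hS : 0 < dotp w (S.mulVec w))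
    (p q : ℝ) (hp : 1 ≤ p) (hq : 1 ≤ q) (hpq : 1 / p + 1 / q = 1)
    (ε : ℝ) (hε : 0 ≤ ε) :
    mixture νpos νneg
        {t | ∃ x', lpnorm p (fun i => x' i - t.1 i) ≤ ε ∧ sg (dotp w x') ≠ t.2}
      = gaussianReal 0 1
          {z | z ≤ (ε * lpnorm q w - dotp w θ) / Real.sqrt (dotp w (S.mulVec w))} := by
  -- conjugate exponents
  have hp0 : (0:ℝ) < p := lt_of_lt_of_le one_pos hp
  have hq0 : (0:ℝ) < q := lt_of_lt_of_le one_pos hq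
  have hp1 : 1 < p := by
    by_contra h
    push_neg at h
    have h1 : (1:ℝ) ≤ 1/p := by rw [le_div_iff₀ hp0]; linarith
    have h2 : 0 < 1/q := by positivity
    linarith
  have hconj : Real.HolderConjugate p q := Real.holderConjugate_iff.mpr ⟨hp1, by simpa [one_div] using hpq⟩
  -- w ≠ 0
  have hw0 : w ≠ 0 := by
    intro h
    rw [h] at hS
    simp [dotp] at hS
  have hdotp : Measurable (fun x : Fin d → ℝ => dotp w x) := by
    unfold dotp
    exact Finset.measurable_sum _ fun i _ => (measurable_pi_apply (X := fun _ : Fin d => ℝ) i).const_mul (w i)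
  set K : ℝ := lpnorm q w with hKdef
  set m : ℝ := dotp w θ with hm
  set v : ℝ := dotp w (S.mulVec w) with hv
  set A : Set ((Fin d → ℝ) × ℝ) :=
    {t | ∃ x', lpnorm p (fun i => x' i - t.1 i) ≤ ε ∧ sg (dotp w x') ≠ t.2} with hA
  have hK0 : 0 ≤ K := lpnorm_nonneg _ _
  -- preimage computations
  have hA1 : (fun x : Fin d → ℝ => (x, (1:ℝ))) ⁻¹' A
      = (fun x => dotp w x) ⁻¹' Set.Iio (ε * K) := by
    ext x
    simp only [hA, Set.mem_preimage, Set.mem_setOf_eq, Set.mem_Iio]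
    constructor
    · rintro ⟨x', h1, h2⟩
      rw [sg_ne_one_iff] at h2
      have hΔ := holder_bound' hconj w (fun i => x' i - x i)
      have hd : dotp w (fun i => x' i - x i) = dotp w x' - dotp w x := by
        simp [dotp, mul_sub, Finset.sum_sub_distrib]
      rw [hd] at hΔ
      have hmul : lpnorm p (fun i => x' i - x i) * K ≤ ε * K :=
        mul_le_mul_of_nonneg_right h1 hK0
      linarith
    · intro h
      obtain ⟨δ, hδ1, hδ2⟩ := exists_extremal hconj hw0 hε
      refine ⟨fun i => x i - δ i, ?_, ?_⟩
      · rw [show (fun i => (x i - δ i) - x i) = (fun i => -δ i) from funext fun i => by ring]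
        simp only [lpnorm, abs_neg]
        exact hδ1
      · rw [sg_ne_one_iff]
        have hd : dotp w (fun i => x i - δ i) = dotp w x - dotp w δ := by
          simp [dotp, mul_sub, Finset.sum_sub_distrib]
        rw [hd, hδ2]
        linarith
  have hA2 : (fun x : Fin d → ℝ => (x, (-1:ℝ))) ⁻¹' A
      = (fun x => dotp w x) ⁻¹' Set.Ici (-(ε * K)) := by
    ext x
    simp only [hA, Set.mem_preimage, Set.mem_setOf_eq, Set.mem_Ici]
    constructor
    · rintro ⟨x', h1, h2⟩
      rw [sg_ne_neg_one_iff] at h2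
      have hΔ := holder_bound hconj w (fun i => x' i - x i)
      have hd : dotp w (fun i => x' i - x i) = dotp w x' - dotp w x := by
        simp [dotp, mul_sub, Finset.sum_sub_distrib]
      rw [hd] at hΔ
      have hmul : lpnorm p (fun i => x' i - x i) * K ≤ ε * K :=
        mul_le_mul_of_nonneg_right h1 hK0
      linarith
    · intro h
      obtain ⟨δ, hδ1, hδ2⟩ := exists_extremal hconj hw0 hε
      refine ⟨fun i => x i + δ i, ?_, ?_⟩
      · rw [show (fun i => (x i + δ i) - x i) = δ from funext fun i => by ring]
        exact hδ1
      · rw [sg_ne_neg_one_iff]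
        have hd : dotp w (fun i => x i + δ i) = dotp w x + dotp w δ := by
          simp [dotp, mul_add, Finset.sum_add_distrib]
        rw [hd, hδ2]
        linarith
  -- compute the mixture measure
  have hmean_neg : dotp w (fun i => -θ i) = -m := by
    simp [dotp, hm, mul_comm]
  rw [mixture, Measure.add_apply, Measure.smul_apply, Measure.smul_apply,
    smul_eq_mul, smul_eq_mul,
    (measurableEmbedding_prod_mk_right (1:ℝ)).map_apply,
    (measurableEmbedding_prod_mk_right (-1:ℝ)).map_apply]
  rw [show (fun y : Fin d → ℝ => (y, (1:ℝ))) ⁻¹' A = (fun x => dotp w x) ⁻¹' Set.Iio (ε * K)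
      from hA1,
    show (fun y : Fin d → ℝ => (y, (-1:ℝ))) ⁻¹' A = (fun x => dotp w x) ⁻¹' Set.Ici (-(ε * K))
      from hA2]
  rw [← Measure.map_apply hdotp measurableSet_Iio,
    ← Measure.map_apply hdotp measurableSet_Ici, hpos w, hneg w, hmean_neg]
  rw [gaussianReal_Iio' m (ε * K) hS, gaussianReal_Ici' (-m) (-(ε * K)) hS]
  rw [show (-m - -(ε * K)) = (ε * K - m) from by ring]
  have hIic : {z : ℝ | z ≤ (ε * K - m) / Real.sqrt v} = Set.Iic ((ε * K - m) / Real.sqrt v) :=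
    rfl
  rw [hIic, ← two_mul, ← mul_assoc, ENNReal.mul_inv_cancel (by norm_num) (by norm_num), one_mul]
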